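/- If e is idempotent mod m, a, b ∈ R_m^e, and gcd(|a|_m, |b|_m) = 1, then |ab|_m = |a|_m · |b|_m. -/
import Mathlib


/-- `e` is an idempotent residue modulo `m`: `e^2 ≡ e (mod m)`. -/
def Idem (m : ℕ) (e : ZMod m) : Prop := e ^ 2 = e

/-- The order `|a|_m`: the least `n ≥ 1` such that `a^n` is idempotent mod `m`. -/
noncomputable def ord (m : ℕ) (a : ZMod m) : ℕ := sInf {n | 1 ≤ n ∧ Idem m (a ^ n)}

/-- `a` is regular modulo `m`: `a^(|a|_m + 1) ≡ a (mod m)`. -/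
noncomputable def Reg (m : ℕ) (a : ZMod m) : Prop := a ^ (ord m a + 1) = a

/-- `R_m^e`: the regular residues mod `m` whose idempotent power is `e`. -/
noncomputable def Rme (m : ℕ) (e : ZMod m) : Set (ZMod m) :=
  {a | Reg m a ∧ a ^ (ord m a) = e}

/-- The orbit of `a` modulo `m`: `{a^j mod m : 1 ≤ j ≤ |a|_m}`. -/
noncomputable def orb (m : ℕ) (a : ZMod m) : Finset (ZMod m) :=
  (Finset.Icc 1 (ord m a)).image (a ^ ·)

lemma idem_pow {m : ℕ} {x : ZMod m} (hx : Idem m x) : ∀ {k : ℕ}, 1 ≤ k → x ^ k = x := by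
  intro k hk
  induction k with
  | zero => omega
  | succ n ih =>
    rcases Nat.lt_or_ge n 1 with h | h
    · have : n = 0 := by omega
      subst this; simp
    · rw [pow_succ, ih h]
      have := hx
      rwa [Idem, pow_two] at this

lemma exists_idem_pow (m : ℕ) (hm : 1 ≤ m) (a : ZMod m) :
    ∃ n, 1 ≤ n ∧ Idem m (a ^ n) := by
  haveI : NeZero m := ⟨by omega⟩
  obtain ⟨i, j, hne, hij⟩ := Finite.exists_ne_map_eq_of_infinite (fun n : ℕ => a ^ n)
  -- wlog i < j
  rcases Nat.lt_or_ge i j with hlt | hge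
  · exact aux a i j hlt hij
  · have hlt : j < i := by omega
    exact aux a j i hlt hij.symm
where
  aux (a : ZMod m) (i j : ℕ) (hlt : i < j) (hij : a ^ i = a ^ j) :
      ∃ n, 1 ≤ n ∧ Idem m (a ^ n) := by
    set d := j - i with hd
    have hd1 : 1 ≤ d := by omega
    have step : ∀ s, i ≤ s → a ^ (s + d) = a ^ s := by
      intro s hs
      have h1 : s + d = (s - i) + j := by omega
      have h2 : s = (s - i) + i := by omega
      rw [h1, pow_add, ← hij, ← pow_add, ← h2]
    have steps : ∀ k s, i ≤ s → a ^ (s + k * d) = a ^ s := by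
      intro k
      induction k with
      | zero => intro s hs; simp
      | succ n ih =>
        intro s hs
        have h1 : s + (n + 1) * d = (s + n * d) + d := by ring
        rw [h1, step _ (by omega), ih s hs]
    refine ⟨d * (i + 1), Nat.mul_pos (by omega) (by omega), ?_⟩
    rw [Idem, ← pow_mul]
    have h2 : d * (i + 1) * 2 = d * (i + 1) + (i + 1) * d := by ring
    rw [h2, steps (i + 1) (d * (i + 1)) (by nlinarith)]

lemma ord_spec (m : ℕ) (hm : 1 ≤ m) (a : ZMod m) :
    1 ≤ ord m a ∧ Idem m (a ^ ord m a) :=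
  Nat.sInf_mem (exists_idem_pow m hm a)

lemma pow_mul_idem {m : ℕ} {e a : ZMod m} (ha : a ∈ Rme m e) {r : ℕ} (hr : 1 ≤ r) :
    a ^ r * e = a ^ r := by
  obtain ⟨hreg, hae⟩ := ha
  have h1 : a * e = a := by
    have h2 := hreg
    rw [Reg, pow_succ] at h2
    rw [← hae, mul_comm]
    exact h2
  obtain ⟨s, rfl⟩ : ∃ s, r = s + 1 := ⟨r - 1, by omega⟩
  rw [pow_succ, mul_assoc, h1]

lemma ord_dvd (m : ℕ) (hm : 1 ≤ m) {e a : ZMod m} (ha : a ∈ Rme m e)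
    {n : ℕ} (hn : 1 ≤ n) (hidem : Idem m (a ^ n)) : ord m a ∣ n := by
  obtain ⟨hpos, _⟩ := ord_spec m hm a
  set α := ord m a with hα
  have hle : α ≤ n := Nat.sInf_le ⟨hn, hidem⟩
  by_contra hndvd
  set r := n % α with hr
  have hr0 : r ≠ 0 := fun h => hndvd (Nat.dvd_of_mod_eq_zero h)
  have hrlt : r < α := Nat.mod_lt _ (by omega)
  have hq : 1 ≤ n / α := Nat.one_le_div_iff (by omega) |>.mpr hle
  have hsplit : n = r + α * (n / α) := (Nat.mod_add_div n α).symm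
  have he' : Idem m e := by rw [← ha.2]; exact (ord_spec m hm a).2
  have han : a ^ n = a ^ r := by
    rw [hsplit, pow_add, pow_mul, ha.2, idem_pow he' hq, pow_mul_idem ha (by omega)]
  have hmem : r ∈ {k | 1 ≤ k ∧ Idem m (a ^ k)} := ⟨by omega, by rw [← han]; exact hidem⟩
  have h2 : α ≤ r := Nat.sInf_le hmem
  omega

/-- If `a, b ∈ R_m^e` have coprime orders, then `|ab|_m = |a|_m · |b|_m`. -/
theorem ord_mul_of_coprime (m : ℕ) (hm : 1 ≤ m) (e : ZMod m) (he : Idem m e)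
    (a b : ZMod m) (ha : a ∈ Rme m e) (hb : b ∈ Rme m e)
    (hcop : Nat.gcd (ord m a) (ord m b) = 1) :
    ord m (a * b) = ord m a * ord m b := by
  obtain ⟨hαpos, _⟩ := ord_spec m hm a
  obtain ⟨hβpos, _⟩ := ord_spec m hm b
  set α := ord m a with hα
  set β := ord m b with hβ
  have haα : a ^ α = e := ha.2
  have hbβ : b ^ β = e := hb.2
  have hee : e * e = e := by rw [← pow_two]; exact he
  have key : (a * b) ^ (α * β) = e := by
    have h1 : a ^ (α * β) = e := by rw [pow_mul, haα, idem_pow he hβpos]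
    have h2 : b ^ (α * β) = e := by rw [mul_comm α β, pow_mul, hbβ, idem_pow he hαpos]
    rw [mul_pow, h1, h2, hee]
  have hmem : α * β ∈ {n | 1 ≤ n ∧ Idem m ((a * b) ^ n)} :=
    ⟨Nat.mul_pos hαpos hβpos, by rw [key]; exact he⟩
  have hγmem : 1 ≤ ord m (a * b) ∧ Idem m ((a * b) ^ ord m (a * b)) :=
    Nat.sInf_mem ⟨α * β, hmem⟩
  set γ := ord m (a * b) with hγ
  have hγle : γ ≤ α * β := Nat.sInf_le hmem
  -- a^(γβ) = (ab)^γ, hence idempotent, hence α ∣ γβ, hence α ∣ γ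
  have hbγβ : b ^ (γ * β) = e := by
    rw [mul_comm γ β, pow_mul, hbβ, idem_pow he hγmem.1]
  have haγβ : a ^ (γ * β) = (a * b) ^ γ := by
    calc a ^ (γ * β) = a ^ (γ * β) * b ^ (γ * β) := by
          rw [hbγβ, pow_mul_idem ha (Nat.mul_pos hγmem.1 hβpos)]
      _ = (a * b) ^ (γ * β) := (mul_pow a b _).symm
      _ = ((a * b) ^ γ) ^ β := pow_mul _ _ _
      _ = (a * b) ^ γ := idem_pow hγmem.2 hβpos
  have hαdvd : α ∣ γ := by
    have : Idem m (a ^ (γ * β)) := by rw [haγβ]; exact hγmem.2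
    exact (Nat.Coprime.dvd_of_dvd_mul_right hcop
      (ord_dvd m hm ha (Nat.mul_pos hγmem.1 hβpos) this))
  have haγα : a ^ (γ * α) = e := by
    rw [mul_comm γ α, pow_mul, haα, idem_pow he hγmem.1]
  have hbγα : b ^ (γ * α) = (a * b) ^ γ := by
    calc b ^ (γ * α) = b ^ (γ * α) * a ^ (γ * α) := by
          rw [haγα, pow_mul_idem hb (Nat.mul_pos hγmem.1 hαpos)]
      _ = (a * b) ^ (γ * α) := by rw [← mul_pow, mul_comm b a]
      _ = ((a * b) ^ γ) ^ α := pow_mul _ _ _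
      _ = (a * b) ^ γ := idem_pow hγmem.2 hαpos
  have hβdvd : β ∣ γ := by
    have : Idem m (b ^ (γ * α)) := by rw [hbγα]; exact hγmem.2
    exact (Nat.Coprime.dvd_of_dvd_mul_right (Nat.Coprime.symm hcop)
      (ord_dvd m hm hb (Nat.mul_pos hγmem.1 hαpos) this))
  have hmul : α * β ∣ γ := Nat.Coprime.mul_dvd_of_dvd_of_dvd hcop hαdvd hβdvd
  have := Nat.le_of_dvd (by omega) hmul
  omega
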